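/- If π is a set partition of [k] of type (1^{a_1} 2^{a_2} ... k^{a_k}), then the maximal subgroup G_{e_π} of U_k at e_π is isomorphic to the direct product of symmetric groups S_{a_1} × S_{a_2} × ··· × S_{a_k}. -/

import Mathlib

open Sum

/-- A set partition `d` of `[k] ∪ [k̄]` (encoded as a setoid on `Fin k ⊕ Fin k`,
top row = `inl`, bottom row = `inr`) is *uniform* if every block contains as many
top-row elements as bottom-row elements. -/
def IsUniform (k : ℕ) (d : Setoid (Fin k ⊕ Fin k)) : Prop :=
  ∀ x : Fin k ⊕ Fin k,
    {a : Fin k | d.r (.inl a) x}.ncard = {b : Fin k | d.r (.inr b) x}.ncard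

/-- Embedding of a two-row diagram into the top two rows of a three-row diagram. -/
def row12 (k : ℕ) : Fin k ⊕ Fin k → Fin k ⊕ (Fin k ⊕ Fin k) :=
  Sum.elim (fun a => .inl a) (fun b => .inr (.inl b))

/-- Embedding of a two-row diagram into the bottom two rows of a three-row diagram. -/
def row23 (k : ℕ) : Fin k ⊕ Fin k → Fin k ⊕ (Fin k ⊕ Fin k) :=
  Sum.elim (fun a => .inr (.inl a)) (fun b => .inr (.inr b))

/-- Embedding of a two-row diagram into the outer two rows of a three-row diagram. -/
def row13 (k : ℕ) : Fin k ⊕ Fin k → Fin k ⊕ (Fin k ⊕ Fin k) :=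
  Sum.elim (fun a => .inl a) (fun b => .inr (.inr b))

/-- The equivalence relation on the three-row vertex set generated by transporting
`d` along the embedding `f`. -/
def liftSetoid (k : ℕ) (f : Fin k ⊕ Fin k → Fin k ⊕ (Fin k ⊕ Fin k))
    (d : Setoid (Fin k ⊕ Fin k)) : Setoid (Fin k ⊕ (Fin k ⊕ Fin k)) :=
  Relation.EqvGen.setoid (fun x y => ∃ a b, d.r a b ∧ x = f a ∧ y = f b)

/-- The diagram product: stack `d` on top of `d'`, take connected components of the
three-row diagram, and restrict to the outer rows. -/
def ubpMul {k : ℕ} (d d' : Setoid (Fin k ⊕ Fin k)) : Setoid (Fin k ⊕ Fin k) :=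
  Setoid.comap (row13 k) (liftSetoid k (row12 k) d ⊔ liftSetoid k (row23 k) d')

/-- The identity diagram `{{1,1̄},…,{k,k̄}}`. -/
def ubpOne (k : ℕ) : Setoid (Fin k ⊕ Fin k) := Setoid.ker (Sum.elim id id)

/-- The set partition of `[k]` induced on the top row. -/
def topPart {k : ℕ} (d : Setoid (Fin k ⊕ Fin k)) : Setoid (Fin k) :=
  Setoid.comap Sum.inl d

/-- The set partition of `[k]` induced on the bottom row. -/
def botPart {k : ℕ} (d : Setoid (Fin k ⊕ Fin k)) : Setoid (Fin k) :=
  Setoid.comap Sum.inr d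

/-- The idempotent diagram `e_π = {A ∪ Ā : A ∈ π}` associated to a set partition `π` of `[k]`. -/
def ePart {k : ℕ} (π : Setoid (Fin k)) : Setoid (Fin k ⊕ Fin k) :=
  Setoid.comap (Sum.elim id id) π

/-- The diagram `{{i, σ(i)‾} : i ∈ [k]}` of a permutation `σ ∈ S_k`. -/
def permToUBP {k : ℕ} (σ : Equiv.Perm (Fin k)) : Setoid (Fin k ⊕ Fin k) :=
  Setoid.ker (Sum.elim (fun i => σ i) id)

/-- The reflection `d̃` of a diagram across a horizontal line (swap barred/unbarred). -/
def reflectUBP {k : ℕ} (d : Setoid (Fin k ⊕ Fin k)) : Setoid (Fin k ⊕ Fin k) :=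
  Setoid.comap Sum.swap d

/-- The image of a set `C ⊆ [k]` of top-row elements under the block bijection of `d`:
the set of bottom-row elements connected to some element of `C`. -/
def blockMap {k : ℕ} (d : Setoid (Fin k ⊕ Fin k)) (C : Set (Fin k)) : Set (Fin k) :=
  {j | ∃ i ∈ C, d.r (.inl i) (.inr j)}

namespace UBPAux

variable {k : ℕ} (π : Setoid (Fin k))

/-- size of the class of `q`. -/
noncomputable def csize (q : Quotient π) : ℕ := {a | Quotient.mk π a = q}.ncard

/-- size-preserving permutations. -/
def SP (σ : Equiv.Perm (Quotient π)) : Prop := ∀ q, csize π (σ q) = csize π q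

def phiFun (σ : Equiv.Perm (Quotient π)) : Fin k ⊕ Fin k → Quotient π :=
  Sum.elim (fun i => σ (Quotient.mk π i)) (fun j => Quotient.mk π j)

def Phi (σ : Equiv.Perm (Quotient π)) : Setoid (Fin k ⊕ Fin k) :=
  Setoid.ker (phiFun π σ)

lemma phi_rel (σ : Equiv.Perm (Quotient π)) (x y : Fin k ⊕ Fin k) :
    (Phi π σ).r x y ↔ phiFun π σ x = phiFun π σ y := Iff.rfl

lemma csize_pos (q : Quotient π) : 0 < csize π q := by
  induction q using Quotient.ind with
  | _ a => exact (Set.ncard_pos (Set.toFinite _)).mpr ⟨a, rfl⟩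

lemma csize_le (q : Quotient π) : csize π q ≤ k := by
  calc csize π q ≤ (Set.univ : Set (Fin k)).ncard :=
        Set.ncard_le_ncard (Set.subset_univ _) Set.finite_univ
    _ = k := by rw [Set.ncard_univ]; simp

lemma SP.inv {σ : Equiv.Perm (Quotient π)} (h : SP π σ) : SP π σ⁻¹ := by
  intro q
  have := h (σ⁻¹ q)
  simpa using this.symm

lemma SP.mul {σ τ : Equiv.Perm (Quotient π)} (hσ : SP π σ) (hτ : SP π τ) : SP π (σ * τ) := by
  intro q
  have h1 := hσ (τ q)
  have h2 := hτ q
  simpa [Equiv.Perm.mul_apply] using h1.trans h2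

lemma topPart_phi (σ : Equiv.Perm (Quotient π)) : topPart (Phi π σ) = π := by
  ext i j
  show σ (Quotient.mk π i) = σ (Quotient.mk π j) ↔ π i j
  rw [σ.apply_eq_iff_eq]
  exact ⟨Quotient.exact, Quotient.sound⟩

lemma botPart_phi (σ : Equiv.Perm (Quotient π)) : botPart (Phi π σ) = π := by
  ext i j
  show (Quotient.mk π i : Quotient π) = Quotient.mk π j ↔ π i j
  exact ⟨Quotient.exact, Quotient.sound⟩

lemma uniform_phi {σ : Equiv.Perm (Quotient π)} (h : SP π σ) : IsUniform k (Phi π σ) := by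
  intro x
  cases x with
  | inl i =>
    have e1 : {a : Fin k | (Phi π σ).r (.inl a) (.inl i)} = {a | Quotient.mk π a = Quotient.mk π i} := by
      ext a
      show σ (Quotient.mk π a) = σ (Quotient.mk π i) ↔ _
      rw [σ.apply_eq_iff_eq]
      rfl
    have e2 : {b : Fin k | (Phi π σ).r (.inr b) (.inl i)} = {b | Quotient.mk π b = σ (Quotient.mk π i)} := rfl
    rw [e1, e2]
    exact (h (Quotient.mk π i)).symm
  | inr j =>
    have e1 : {a : Fin k | (Phi π σ).r (.inl a) (.inr j)} = {a | Quotient.mk π a = σ⁻¹ (Quotient.mk π j)} := by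
      ext a
      show σ (Quotient.mk π a) = Quotient.mk π j ↔ _
      constructor
      · intro hh; show Quotient.mk π a = _; rw [← hh, Equiv.Perm.coe_inv, Equiv.symm_apply_apply]
      · intro hh; replace hh : Quotient.mk π a = σ⁻¹ (Quotient.mk π j) := hh
        rw [hh, Equiv.Perm.coe_inv, Equiv.apply_symm_apply]
    have e2 : {b : Fin k | (Phi π σ).r (.inr b) (.inr j)} = {b | Quotient.mk π b = Quotient.mk π j} := rfl
    rw [e1, e2]
    show csize π (σ⁻¹ (Quotient.mk π j)) = csize π (Quotient.mk π j)
    have := h (σ⁻¹ (Quotient.mk π j))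
    rw [Equiv.Perm.coe_inv, Equiv.apply_symm_apply] at this
    exact this.symm

end UBPAux

namespace MulLemma

variable {k : ℕ} {π : Setoid (Fin k)}

/-- the "component" function on the 3-row diagram for the product Φσ · Φτ. -/
noncomputable def g3 (σ τ : Equiv.Perm (Quotient π)) : Fin k ⊕ (Fin k ⊕ Fin k) → Quotient π :=
  Sum.elim (fun i => τ (σ (Quotient.mk π i)))
    (Sum.elim (fun m => τ (Quotient.mk π m)) (fun j => Quotient.mk π j))

lemma g3_row12 (σ τ : Equiv.Perm (Quotient π)) (a : Fin k ⊕ Fin k) :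
    g3 σ τ (row12 k a) = τ (UBPAux.phiFun π σ a) := by cases a <;> rfl

lemma g3_row23 (σ τ : Equiv.Perm (Quotient π)) (a : Fin k ⊕ Fin k) :
    g3 σ τ (row23 k a) = UBPAux.phiFun π τ a := by cases a <;> rfl

lemma sup_eq_ker (σ τ : Equiv.Perm (Quotient π)) :
    liftSetoid k (row12 k) (UBPAux.Phi π σ) ⊔ liftSetoid k (row23 k) (UBPAux.Phi π τ)
      = Setoid.ker (g3 σ τ) := by
  set L1 := liftSetoid k (row12 k) (UBPAux.Phi π σ) with hL1
  set L2 := liftSetoid k (row23 k) (UBPAux.Phi π τ) with hL2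
  have l1 : ∀ a b : Fin k ⊕ Fin k, (UBPAux.Phi π σ).r a b → (L1 ⊔ L2).r (row12 k a) (row12 k b) := by
    intro a b hab
    exact le_sup_left (α := Setoid _) (Relation.EqvGen.rel _ _ ⟨a, b, hab, rfl, rfl⟩)
  have l2 : ∀ a b : Fin k ⊕ Fin k, (UBPAux.Phi π τ).r a b → (L1 ⊔ L2).r (row23 k a) (row23 k b) := by
    intro a b hab
    exact le_sup_right (α := Setoid _) (Relation.EqvGen.rel _ _ ⟨a, b, hab, rfl, rfl⟩)
  apply le_antisymm
  · apply sup_le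
    · apply Setoid.eqvGen_le
      rintro x y ⟨a, b, hab, rfl, rfl⟩
      show g3 σ τ (row12 k a) = g3 σ τ (row12 k b)
      rw [g3_row12, g3_row12]
      exact congrArg τ hab
    · apply Setoid.eqvGen_le
      rintro x y ⟨a, b, hab, rfl, rfl⟩
      show g3 σ τ (row23 k a) = g3 σ τ (row23 k b)
      rw [g3_row23, g3_row23]
      exact hab
  · intro x y hxy
    replace hxy : g3 σ τ x = g3 σ τ y := hxy
    -- helper: top i connected to mid m when σ⟦i⟧ = ⟦m⟧
    have e12 : ∀ i m : Fin k, σ (Quotient.mk π i) = Quotient.mk π m →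
        (L1 ⊔ L2).r (.inl i) (.inr (.inl m)) := fun i m h => l1 (.inl i) (.inr m) h
    have e23 : ∀ m j : Fin k, τ (Quotient.mk π m) = Quotient.mk π j →
        (L1 ⊔ L2).r (.inr (.inl m)) (.inr (.inr j)) := fun m j h => l2 (.inl m) (.inr j) h
    rcases x with i | m | j <;> rcases y with i' | m' | j'
    · exact l1 (.inl i) (.inl i') (τ.injective hxy)
    · exact e12 i m' (τ.injective hxy)
    · -- top to bottom
      have hmid : σ (Quotient.mk π i) = Quotient.mk π (σ (Quotient.mk π i)).out := by
        rw [Quotient.out_eq]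
      refine Setoid.trans' _ (e12 i _ hmid) (e23 _ j' ?_)
      rw [← hmid]
      exact hxy
    · exact Setoid.symm' _ (e12 i' m (τ.injective hxy.symm))
    · exact l2 (.inl m) (.inl m') hxy
    · exact e23 m j' hxy
    · refine Setoid.symm' _ ?_
      have hmid : σ (Quotient.mk π i') = Quotient.mk π (σ (Quotient.mk π i')).out := by
        rw [Quotient.out_eq]
      refine Setoid.trans' _ (e12 i' _ hmid) (e23 _ j ?_)
      rw [← hmid]
      exact hxy.symm
    · exact Setoid.symm' _ (e23 m' j hxy.symm)
    · exact l2 (.inr j) (.inr j') hxy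

lemma ubpMul_phi (σ τ : Equiv.Perm (Quotient π)) :
    ubpMul (UBPAux.Phi π σ) (UBPAux.Phi π τ) = UBPAux.Phi π (τ * σ) := by
  unfold ubpMul
  rw [sup_eq_ker]
  ext x y
  show g3 σ τ (row13 k x) = g3 σ τ (row13 k y) ↔ UBPAux.phiFun π (τ * σ) x = UBPAux.phiFun π (τ * σ) y
  have h13 : ∀ a : Fin k ⊕ Fin k, g3 σ τ (row13 k a) = UBPAux.phiFun π (τ * σ) a := by
    intro a; cases a <;> rfl
  rw [h13, h13]

end MulLemma

namespace BijLemma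

variable {k : ℕ} {π : Setoid (Fin k)}

lemma phi_injective {σ τ : Equiv.Perm (Quotient π)} (h : UBPAux.Phi π σ = UBPAux.Phi π τ) :
    σ = τ := by
  ext q
  induction q using Quotient.ind with
  | _ i =>
    obtain ⟨j, hj⟩ : ∃ j : Fin k, Quotient.mk π j = σ (Quotient.mk π i) :=
      Quotient.exists_rep _
    have h1 : (UBPAux.Phi π σ).r (.inl i) (.inr j) := hj.symm
    rw [h] at h1
    replace h1 : τ (Quotient.mk π i) = Quotient.mk π j := h1
    show σ _ = τ _
    rw [h1, hj]

variable (d : Setoid (Fin k ⊕ Fin k))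

lemma top_rel (hT : topPart d = π) (i i' : Fin k) : d.r (.inl i) (.inl i') ↔ π i i' := by
  rw [← hT]; exact Iff.rfl

lemma bot_rel (hB : botPart d = π) (j j' : Fin k) : d.r (.inr j) (.inr j') ↔ π j j' := by
  rw [← hB]; exact Iff.rfl

lemma exists_bot (hU : IsUniform k d) (i : Fin k) : ∃ j : Fin k, d.r (.inl i) (.inr j) := by
  have h := hU (.inl i)
  have hne : {a : Fin k | d.r (.inl a) (.inl i)}.Nonempty := ⟨i, d.refl' _⟩
  have hpos : 0 < {a : Fin k | d.r (.inl a) (.inl i)}.ncard :=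
    (Set.ncard_pos (Set.toFinite _)).mpr hne
  rw [h] at hpos
  obtain ⟨j, hj⟩ := (Set.ncard_pos (Set.toFinite _)).mp hpos
  exact ⟨j, d.symm' hj⟩

noncomputable def F0 (hU : IsUniform k d) (i : Fin k) : Fin k := (exists_bot d hU i).choose

lemma F0_spec (hU : IsUniform k d) (i : Fin k) : d.r (.inl i) (.inr (F0 d hU i)) :=
  (exists_bot d hU i).choose_spec

noncomputable def F (hU : IsUniform k d) (hT : topPart d = π) (hB : botPart d = π) :
    Quotient π → Quotient π :=
  Quotient.lift (fun i => Quotient.mk π (F0 d hU i)) (by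
    intro i i' hii
    have h1 := F0_spec d hU i
    have h2 := F0_spec d hU i'
    have h3 : d.r (.inl i) (.inl i') := (top_rel d hT i i').mpr hii
    have : d.r (.inr (F0 d hU i)) (.inr (F0 d hU i')) :=
      d.trans' (d.symm' h1) (d.trans' h3 h2)
    exact Quotient.sound ((bot_rel d hB _ _).mp this))

variable (hU : IsUniform k d) (hT : topPart d = π) (hB : botPart d = π)

lemma F_spec (i j : Fin k) :
    d.r (.inl i) (.inr j) ↔ F d hU hT hB (Quotient.mk π i) = Quotient.mk π j := by
  have h1 := F0_spec d hU i
  constructor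
  · intro h
    have : d.r (.inr (F0 d hU i)) (.inr j) := d.trans' (d.symm' h1) h
    exact Quotient.sound ((bot_rel d hB _ _).mp this)
  · intro h
    have : π (F0 d hU i) j := Quotient.exact h
    exact d.trans' h1 ((bot_rel d hB _ _).mpr this)

lemma F_injective : Function.Injective (F d hU hT hB) := by
  intro q q' h
  induction q using Quotient.ind with
  | _ i =>
  induction q' using Quotient.ind with
  | _ i' =>
    have h1 : d.r (.inl i) (.inr (F0 d hU i')) := by
      rw [F_spec d hU hT hB, h]
      exact ((F_spec d hU hT hB i' (F0 d hU i')).mp (F0_spec d hU i'))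
    have h2 := F0_spec d hU i'
    have : d.r (.inl i) (.inl i') := d.trans' h1 (d.symm' h2)
    exact Quotient.sound ((top_rel d hT i i').mp this)

noncomputable def sigmaOf : Equiv.Perm (Quotient π) :=
  Equiv.ofBijective (F d hU hT hB)
    (Finite.injective_iff_bijective.mp (F_injective d hU hT hB))

lemma sigmaOf_apply (q : Quotient π) : sigmaOf d hU hT hB q = F d hU hT hB q := rfl

lemma sigmaOf_sp : UBPAux.SP π (sigmaOf d hU hT hB) := by
  intro q
  induction q using Quotient.ind with
  | _ i =>
    have h := hU (.inl i)
    have e1 : {a : Fin k | d.r (.inl a) (.inl i)} = {a | Quotient.mk π a = Quotient.mk π i} := by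
      ext a
      rw [Set.mem_setOf_eq, Set.mem_setOf_eq, top_rel d hT]
      exact ⟨fun hh => Quotient.sound hh, fun hh => Quotient.exact hh⟩
    have e2 : {b : Fin k | d.r (.inr b) (.inl i)} =
        {b | Quotient.mk π b = sigmaOf d hU hT hB (Quotient.mk π i)} := by
      ext b
      rw [Set.mem_setOf_eq, Set.mem_setOf_eq, sigmaOf_apply]
      constructor
      · intro hh
        exact ((F_spec d hU hT hB i b).mp (d.symm' hh)).symm
      · intro hh
        exact d.symm' ((F_spec d hU hT hB i b).mpr hh.symm)
    rw [e1, e2] at h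
    exact h.symm

lemma phi_sigmaOf : UBPAux.Phi π (sigmaOf d hU hT hB) = d := by
  ext x y
  show UBPAux.phiFun π _ x = UBPAux.phiFun π _ y ↔ d.r x y
  rcases x with i | j <;> rcases y with i' | j'
  · show sigmaOf d hU hT hB (Quotient.mk π i) = sigmaOf d hU hT hB (Quotient.mk π i') ↔ _
    rw [(sigmaOf d hU hT hB).apply_eq_iff_eq, top_rel d hT (π := π)]
    exact ⟨fun hh => (top_rel d hT i i').mp ((top_rel d hT i i').mpr (Quotient.exact hh)),
      fun hh => Quotient.sound hh⟩
  · show sigmaOf d hU hT hB (Quotient.mk π i) = Quotient.mk π j' ↔ _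
    rw [sigmaOf_apply, ← F_spec d hU hT hB]
  · show Quotient.mk π j = sigmaOf d hU hT hB (Quotient.mk π i') ↔ _
    rw [sigmaOf_apply, eq_comm, ← F_spec d hU hT hB]
    exact ⟨fun hh => d.symm' hh, fun hh => d.symm' hh⟩
  · show (Quotient.mk π j : Quotient π) = Quotient.mk π j' ↔ _
    rw [bot_rel d hB (π := π)]
    exact ⟨Quotient.exact, Quotient.sound⟩

end BijLemma

namespace ProdLemma

variable {k : ℕ} (π : Setoid (Fin k))

/-- the size function into `Fin (k+1)`. -/
noncomputable def szf (q : Quotient π) : Fin (k + 1) :=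
  ⟨UBPAux.csize π q, Nat.lt_succ_of_le (UBPAux.csize_le π q)⟩

noncomputable def aCount (i : Fin (k + 1)) : ℕ :=
  Set.ncard {C ∈ π.classes | C.ncard = (i : ℕ)}

lemma csize_eq_class_ncard (q : Quotient π) :
    UBPAux.csize π q = ((Setoid.quotientEquivClasses π q : Set (Fin k))).ncard := by
  induction q using Quotient.ind with
  | _ x =>
    rw [Setoid.quotientEquivClasses_mk_eq]
    unfold UBPAux.csize
    congr 1
    ext a
    exact ⟨Quotient.exact, Quotient.sound⟩

/-- the fiber of `szf` over `i` is equivalent to `Fin (aCount i)`. -/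
noncomputable def fiberEquiv (i : Fin (k + 1)) :
    {q : Quotient π // szf π q = i} ≃ Fin (aCount π i) := by
  refine Equiv.trans (Equiv.subtypeEquiv (Setoid.quotientEquivClasses π)
    (fun q => ?_) : {q : Quotient π // szf π q = i} ≃
      {C : π.classes // (C : Set (Fin k)).ncard = (i : ℕ)}) ?_
  · constructor
    · intro h
      rw [← csize_eq_class_ncard]
      rw [← h]; rfl
    · intro h
      rw [← csize_eq_class_ncard] at h
      exact Fin.ext h
  · refine Equiv.trans (Equiv.subtypeSubtypeEquivSubtypeInter (· ∈ π.classes) (fun C => C.ncard = (i : ℕ))) ?_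
    refine Equiv.trans ?_ ((Finite.equivFin _).trans
      (finCongr (Nat.card_coe_set_eq {C ∈ π.classes | C.ncard = (i : ℕ)})))
    exact Equiv.refl _

/-- restriction of a size-preserving permutation to a fiber. -/
def restrictPerm (σ : Equiv.Perm (Quotient π)) (hσ : ∀ q, szf π (σ q) = szf π q)
    (i : Fin (k + 1)) : Equiv.Perm {q : Quotient π // szf π q = i} :=
  Equiv.subtypeEquiv σ (fun q => by rw [hσ q])

lemma sp_szf {σ : Equiv.Perm (Quotient π)} (hσ : UBPAux.SP π σ) (q : Quotient π) :
    szf π (σ q) = szf π q := Fin.ext (hσ q)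

noncomputable def Psi (σ : Equiv.Perm (Quotient π)) (hσ : UBPAux.SP π σ) :
    ∀ i : Fin (k + 1), Equiv.Perm (Fin (aCount π i)) :=
  fun i => (fiberEquiv π i).permCongr (restrictPerm π σ (sp_szf π hσ) i)

lemma psi_congr {σ τ : Equiv.Perm (Quotient π)} (h : σ = τ) (hσ : UBPAux.SP π σ)
    (hτ : UBPAux.SP π τ) : Psi π σ hσ = Psi π τ hτ := by subst h; rfl

lemma psi_mul {σ τ : Equiv.Perm (Quotient π)} (hσ : UBPAux.SP π σ) (hτ : UBPAux.SP π τ)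
    (i : Fin (k + 1)) :
    Psi π (σ * τ) (UBPAux.SP.mul π hσ hτ) i = Psi π σ hσ i * Psi π τ hτ i := by
  have hr : restrictPerm π (σ * τ) (sp_szf π (UBPAux.SP.mul π hσ hτ)) i =
      restrictPerm π σ (sp_szf π hσ) i * restrictPerm π τ (sp_szf π hτ) i := by
    ext q
    rfl
  unfold Psi
  rw [hr]
  ext z
  simp [Equiv.permCongr_apply, Equiv.Perm.mul_apply]

lemma psi_injective {σ τ : Equiv.Perm (Quotient π)} (hσ : UBPAux.SP π σ) (hτ : UBPAux.SP π τ)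
    (h : Psi π σ hσ = Psi π τ hτ) : σ = τ := by
  ext q
  have hi := congrFun h (szf π q)
  have : restrictPerm π σ (sp_szf π hσ) (szf π q) = restrictPerm π τ (sp_szf π hτ) (szf π q) :=
    (fiberEquiv π (szf π q)).permCongr.injective hi
  have := congrArg (fun e => (e ⟨q, rfl⟩ : {q' // szf π q' = szf π q}).1) this
  exact this

lemma psi_surjective (g : ∀ i : Fin (k + 1), Equiv.Perm (Fin (aCount π i))) :
    ∃ σ : Equiv.Perm (Quotient π), ∃ hσ : UBPAux.SP π σ, Psi π σ hσ = g := by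
  classical
  set τf : ∀ i : Fin (k + 1), Equiv.Perm {q : Quotient π // szf π q = i} :=
    fun i => (fiberEquiv π i).permCongr.symm (g i) with hτf
  set σ : Equiv.Perm (Quotient π) :=
    (Equiv.sigmaFiberEquiv (szf π)).symm.trans
      ((Equiv.sigmaCongrRight τf).trans (Equiv.sigmaFiberEquiv (szf π))) with hσdef
  have happ : ∀ q : Quotient π, σ q = (τf (szf π q) ⟨q, rfl⟩ : {q' // szf π q' = szf π q}).1 := by
    intro q; rfl
  have hszf : ∀ q, szf π (σ q) = szf π q := by
    intro q
    rw [happ q]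
    exact (τf (szf π q) ⟨q, rfl⟩).2
  have hsp : UBPAux.SP π σ := fun q => congrArg Fin.val (hszf q)
  refine ⟨σ, hsp, ?_⟩
  funext i
  have hr : restrictPerm π σ (sp_szf π hsp) i = τf i := by
    ext z
    obtain ⟨q, hq⟩ := z
    show σ q = _
    rw [happ q]
    subst hq
    rfl
  show (fiberEquiv π i).permCongr (restrictPerm π σ (sp_szf π hsp) i) = g i
  rw [hr, hτf]
  exact (fiberEquiv π i).permCongr.apply_symm_apply (g i)

end ProdLemma

/-- If `π` has type `(1^{a_1} 2^{a_2} … k^{a_k})`, the maximal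
subgroup of `U_k` at `e_π` is isomorphic (as a group, expressed here by a bijection
preserving the diagram product) to `S_{a_1} × ⋯ × S_{a_k}`. -/
theorem maxSubgroup_iso_prod_symm (k : ℕ) (π : Setoid (Fin k)) :
    ∃ f : {d : Setoid (Fin k ⊕ Fin k) // IsUniform k d ∧ topPart d = π ∧ botPart d = π} →
        ∀ i : Fin (k + 1),
          Equiv.Perm (Fin (Set.ncard {C ∈ π.classes | C.ncard = (i : ℕ)})),
      Function.Bijective f ∧
      ∀ (x y : {d : Setoid (Fin k ⊕ Fin k) //
            IsUniform k d ∧ topPart d = π ∧ botPart d = π})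
        (h : IsUniform k (ubpMul x.1 y.1) ∧ topPart (ubpMul x.1 y.1) = π ∧
          botPart (ubpMul x.1 y.1) = π),
        f ⟨ubpMul x.1 y.1, h⟩ = f x * f y := by
  classical
  refine ⟨fun dd => ProdLemma.Psi π (BijLemma.sigmaOf dd.1 dd.2.1 dd.2.2.1 dd.2.2.2)⁻¹
      (UBPAux.SP.inv π (BijLemma.sigmaOf_sp dd.1 dd.2.1 dd.2.2.1 dd.2.2.2)), ⟨?_, ?_⟩, ?_⟩
  · -- injective
    intro dd dd' h
    have h2 := ProdLemma.psi_injective π _ _ h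
    have h3 : BijLemma.sigmaOf dd.1 dd.2.1 dd.2.2.1 dd.2.2.2
        = BijLemma.sigmaOf dd'.1 dd'.2.1 dd'.2.2.1 dd'.2.2.2 := inv_injective h2
    have h4 : dd.1 = dd'.1 := by
      rw [← BijLemma.phi_sigmaOf dd.1 dd.2.1 dd.2.2.1 dd.2.2.2,
        ← BijLemma.phi_sigmaOf dd'.1 dd'.2.1 dd'.2.2.1 dd'.2.2.2, h3]
    exact Subtype.ext h4
  · -- surjective
    intro g
    obtain ⟨σ, hσ, hg⟩ := ProdLemma.psi_surjective π g
    refine ⟨⟨UBPAux.Phi π σ⁻¹, UBPAux.uniform_phi π (UBPAux.SP.inv π hσ),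
      UBPAux.topPart_phi π σ⁻¹, UBPAux.botPart_phi π σ⁻¹⟩, ?_⟩
    have hsig : BijLemma.sigmaOf (UBPAux.Phi π σ⁻¹) (UBPAux.uniform_phi π (UBPAux.SP.inv π hσ))
        (UBPAux.topPart_phi π σ⁻¹) (UBPAux.botPart_phi π σ⁻¹) = σ⁻¹ :=
      BijLemma.phi_injective (BijLemma.phi_sigmaOf _ _ _ _)
    refine Eq.trans ?_ hg
    exact ProdLemma.psi_congr π (by rw [hsig, inv_inv]) _ _
  · -- multiplicative
    intro x y h
    set σx := BijLemma.sigmaOf x.1 x.2.1 x.2.2.1 x.2.2.2 with hσx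
    set σy := BijLemma.sigmaOf y.1 y.2.1 y.2.2.1 y.2.2.2 with hσy
    have hx : UBPAux.Phi π σx = x.1 := BijLemma.phi_sigmaOf _ _ _ _
    have hy : UBPAux.Phi π σy = y.1 := BijLemma.phi_sigmaOf _ _ _ _
    have hmul : ubpMul x.1 y.1 = UBPAux.Phi π (σy * σx) := by
      rw [← hx, ← hy, MulLemma.ubpMul_phi]
    have hsigz : BijLemma.sigmaOf (ubpMul x.1 y.1) h.1 h.2.1 h.2.2 = σy * σx :=
      BijLemma.phi_injective (by rw [BijLemma.phi_sigmaOf]; exact hmul)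
    have hinv : (BijLemma.sigmaOf (ubpMul x.1 y.1) h.1 h.2.1 h.2.2)⁻¹ = σx⁻¹ * σy⁻¹ := by
      rw [hsigz, mul_inv_rev]
    refine Eq.trans (ProdLemma.psi_congr π hinv _
      (UBPAux.SP.mul π (UBPAux.SP.inv π (BijLemma.sigmaOf_sp x.1 x.2.1 x.2.2.1 x.2.2.2))
        (UBPAux.SP.inv π (BijLemma.sigmaOf_sp y.1 y.2.1 y.2.2.1 y.2.2.2)))) ?_
    funext i
    exact ProdLemma.psi_mul π _ _ i
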